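/- For every nonzero real z with |z| < π, coth z = 1/z + Σ_{n≥1} (2^{2n} B_{2n} / (2n)!) · z^{2n-1}, where B_{2n} are the Bernoulli numbers and the series converges. -/

import Mathlib

open Real

/-- Bound on Bernoulli numbers from zeta values. -/
lemma bernoulli_coeff_bound (k : ℕ) (hk : k ≠ 0) :
    |(bernoulli (2 * k) : ℝ) / (Nat.factorial (2 * k))| ≤ 4 / (2 * π) ^ (2 * k) := by
  have hZ := hasSum_zeta_nat hk
  set Z : ℝ := ∑' n : ℕ, 1 / (n : ℝ) ^ (2 * k) with hZdef
  have hZeq : Z = (-1 : ℝ) ^ (k + 1) * (2 : ℝ) ^ (2 * k - 1) * π ^ (2 * k) *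
      bernoulli (2 * k) / (Nat.factorial (2 * k)) := hZ.tsum_eq
  have hZ0 : 0 ≤ Z := tsum_nonneg fun n => by positivity
  have hZ2 : Z ≤ π ^ 2 / 6 := by
    rw [← hasSum_zeta_two.tsum_eq]
    refine Summable.tsum_le_tsum (fun n => ?_) hZ.summable hasSum_zeta_two.summable
    rcases eq_or_ne n 0 with rfl | hn
    · simp [zero_pow, Nat.mul_ne_zero two_ne_zero hk]
    · have h1 : (1 : ℝ) ≤ (n : ℝ) := by exact_mod_cast Nat.one_le_iff_ne_zero.2 hn
      gcongr
      · omega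
  have hle2 : Z ≤ 2 := by
    refine hZ2.trans ?_
    nlinarith [Real.pi_lt_d2, Real.pi_pos]
  have hpos : (0 : ℝ) < (2 : ℝ) ^ (2 * k - 1) * π ^ (2 * k) := by positivity
  have habs : (2 : ℝ) ^ (2 * k - 1) * π ^ (2 * k) *
      |(bernoulli (2 * k) : ℝ) / (Nat.factorial (2 * k))| = Z := by
    have h4 := congrArg abs hZeq
    rw [abs_of_nonneg hZ0] at h4
    rw [h4]
    simp only [abs_div, abs_mul, abs_pow, abs_neg, abs_one, one_pow, one_mul,
      abs_of_pos Real.pi_pos, Nat.abs_cast, abs_two]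
    ring
  have h2pi : (2 * π) ^ (2 * k) = 2 * ((2 : ℝ) ^ (2 * k - 1) * π ^ (2 * k)) := by
    rw [mul_pow, ← mul_assoc]
    congr 1
    rw [← pow_succ']
    congr 1
    omega
  rw [h2pi]
  rw [div_mul_eq_div_div, le_div_iff₀ hpos, mul_comm]
  linarith [habs, hle2]

open Finset in
/-- Cauchy product coefficient identity from the formal power series identity. -/
lemma bernoulli_cauchy (n : ℕ) :
    ∑ p ∈ Finset.HasAntidiagonal.antidiagonal n, ((bernoulli p.1 : ℝ) / (Nat.factorial p.1)) *
      (if p.2 = 0 then (0:ℝ) else 1 / (Nat.factorial p.2)) = if n = 1 then 1 else 0 := by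
  have h := bernoulliPowerSeries_mul_exp_sub_one ℚ
  have h2 := congrArg (PowerSeries.coeff n) h
  rw [PowerSeries.coeff_mul, PowerSeries.coeff_X] at h2
  have h3 : ∀ p : ℕ × ℕ, p ∈ Finset.HasAntidiagonal.antidiagonal n →
      (PowerSeries.coeff p.1) (bernoulliPowerSeries ℚ) *
        (PowerSeries.coeff p.2) (PowerSeries.exp ℚ - 1) =
      (bernoulli p.1 / (Nat.factorial p.1 : ℚ)) *
        (if p.2 = 0 then (0:ℚ) else 1 / (Nat.factorial p.2 : ℚ)) := by
    intro p _
    congr 1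
    · simp [bernoulliPowerSeries]
    · rw [map_sub, PowerSeries.coeff_exp]
      rcases eq_or_ne p.2 0 with hp | hp
      · simp [hp]
      · simp [hp, PowerSeries.coeff_one]
  rw [Finset.sum_congr rfl h3] at h2
  have := congrArg (fun q : ℚ => (q : ℝ)) h2
  push_cast [apply_ite (fun q : ℚ => (q : ℝ))] at this
  simpa using this

theorem coth_expansion (z : ℝ) (hz : z ≠ 0) (hz2 : |z| < Real.pi) :
    HasSum (fun n : ℕ =>
        (2 : ℝ) ^ (2 * (n + 1)) * (bernoulli (2 * (n + 1)) : ℝ) /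
          (Nat.factorial (2 * (n + 1))) * z ^ (2 * (n + 1) - 1))
      (Real.cosh z / Real.sinh z - 1 / z) := by
  set w : ℝ := 2 * z with hwdef
  have hw0 : w ≠ 0 := by simp [hwdef, hz]
  set g : ℕ → ℝ := fun k => (bernoulli k : ℝ) / (Nat.factorial k) * w ^ k with hgdef
  set d : ℕ → ℝ := fun k => if k = 0 then 0 else w ^ k / (Nat.factorial k) with hddef
  set q : ℝ := |w| / (2 * π) with hqdef
  have hq0 : 0 ≤ q := by positivity
  have hq1 : q < 1 := by
    rw [hqdef, div_lt_one (by positivity)]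
    calc |w| = 2 * |z| := by rw [hwdef, abs_mul]; simp
    _ < 2 * π := by linarith
  -- norm bound for g
  have hgbound : ∀ k, ‖g k‖ ≤ 4 * q ^ k := by
    intro k
    have hwk : ‖g k‖ = |(bernoulli k : ℝ) / (Nat.factorial k)| * |w| ^ k := by
      rw [hgdef, Real.norm_eq_abs, abs_mul, abs_pow]
    match k with
    | 0 => norm_num [hgdef]
    | 1 =>
      rw [hwk]
      have hb1 : |((bernoulli 1 : ℚ) : ℝ) / (Nat.factorial 1)| = 1/2 := by
        rw [bernoulli_one]; norm_num
      rw [hb1, pow_one, hqdef, pow_one, ← mul_div_assoc]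
      rw [le_div_iff₀ (by positivity)]
      nlinarith [abs_nonneg w, Real.pi_lt_d2]
    | (k + 2) =>
      rcases Nat.even_or_odd (k + 2) with he | ho
      · obtain ⟨m, hm⟩ := he
        have hm' : k + 2 = 2 * m := by omega
        have hm0 : m ≠ 0 := by omega
        rw [hwk, hm']
        have hb := bernoulli_coeff_bound m hm0
        have h1 : |(bernoulli (2*m) : ℝ) / (Nat.factorial (2*m))| * |w| ^ (2*m)
            ≤ (4 / (2 * π) ^ (2*m)) * |w| ^ (2*m) := by
          gcongr
        refine h1.trans ?_
        rw [hqdef, div_pow]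
        ring_nf
        exact le_rfl
      · have hb : (bernoulli (k+2) : ℝ) = 0 := by
          have h1 : bernoulli (k + 2) = (-1) ^ (k + 2) * bernoulli' (k + 2) := rfl
          rw [h1, bernoulli'_eq_zero_of_odd ho (by omega)]
          simp
        rw [hwk, hb]
        simp only [abs_div, abs_zero, zero_div, zero_mul]
        positivity
  have hsumgeom : Summable fun k : ℕ => 4 * q ^ k :=
    (summable_geometric_of_lt_one hq0 hq1).mul_left 4
  have hgnorm : Summable fun k => ‖g k‖ :=
    Summable.of_nonneg_of_le (fun k => norm_nonneg _) hgbound hsumgeom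
  have hgsum : Summable g := hgnorm.of_norm
  -- d sums to exp w - 1
  have hexp : HasSum (fun k => w ^ k / (Nat.factorial k)) (Real.exp w) := by
    rw [Real.exp_eq_exp_ℝ]
    exact NormedSpace.expSeries_div_hasSum_exp w
  have hdsum : HasSum d (Real.exp w - 1) := by
    have h0 : HasSum (fun k : ℕ => if k = 0 then (1:ℝ) else 0) 1 := hasSum_ite_eq 0 1
    have h2 := hexp.sub h0
    convert h2 using 2 with k
    · rfl
    rw [hddef]
    rcases eq_or_ne k 0 with rfl | hk
    · simp
    · simp [hk]
  have hdnorm : Summable fun k => ‖d k‖ := by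
    refine Summable.of_nonneg_of_le (fun k => norm_nonneg _) (fun k => ?_)
      (Real.summable_pow_div_factorial |w|)
    rw [hddef]
    rcases eq_or_ne k 0 with rfl | hk
    · simp
    · simp only [hk, if_false]
      rw [Real.norm_eq_abs, abs_div, abs_pow]
      simp [abs_of_nonneg (by positivity : (0:ℝ) ≤ ((Nat.factorial k : ℝ)))]
  -- the product identity
  have hexpne : Real.exp w - 1 ≠ 0 := by
    intro h
    have h1 : Real.exp w = Real.exp 0 := by rw [Real.exp_zero]; linarith
    exact hw0 (Real.exp_eq_exp.mp h1)
  have hprod : (∑' k, g k) * (Real.exp w - 1) = w := by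
    rw [← hdsum.tsum_eq]
    rw [tsum_mul_tsum_eq_tsum_sum_antidiagonal_of_summable_norm hgnorm hdnorm]
    have hterm : ∀ n : ℕ, ∑ p ∈ Finset.HasAntidiagonal.antidiagonal n, g p.1 * d p.2
        = (if n = 1 then 1 else 0) * w ^ n := by
      intro n
      have h1 : ∀ p : ℕ × ℕ, p ∈ Finset.HasAntidiagonal.antidiagonal n → g p.1 * d p.2
          = ((bernoulli p.1 : ℝ) / (Nat.factorial p.1)) *
              (if p.2 = 0 then (0:ℝ) else 1 / (Nat.factorial p.2)) * w ^ n := by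
        intro p hp
        rw [Finset.HasAntidiagonal.mem_antidiagonal] at hp
        rw [hgdef, hddef]
        simp only
        rcases eq_or_ne p.2 0 with h2 | h2
        · simp [h2]
        · simp only [h2, if_false]
          rw [← hp, pow_add]
          ring
      rw [Finset.sum_congr rfl h1, ← Finset.sum_mul, bernoulli_cauchy]
    rw [tsum_congr hterm]
    rw [tsum_eq_single 1 (by intro b hb; simp [hb])]
    simp
  have hS : (∑' k, g k) = w / (Real.exp w - 1) := by
    rw [eq_div_iff hexpne]
    exact hprod
  have hgs : HasSum g (w / (Real.exp w - 1)) := hS ▸ hgsum.hasSum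
  -- strip first two terms
  have h01 : ∑ i ∈ Finset.range 2, g i = 1 - z := by
    rw [Finset.sum_range_succ, Finset.sum_range_one, hgdef]
    simp [bernoulli_one, hwdef]
    norm_num
    ring
  have hshift : HasSum (fun n => g (n + 2)) (w / (Real.exp w - 1) - (1 - z)) := by
    rw [← h01]
    exact (hasSum_nat_add_iff' 2).mpr hgs
  -- restrict to even indices
  have heven : HasSum (fun n => g (2 * n + 2)) (w / (Real.exp w - 1) - (1 - z)) := by
    have hinj : Function.Injective (fun n : ℕ => 2 * n) := fun a b h => by
      simp only [] at h; omega
    have hvan : ∀ x ∉ Set.range (fun n : ℕ => 2 * n), g (x + 2) = 0 := by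
      intro x hx
      have hodd : Odd (x + 2) := by
        rcases Nat.even_or_odd x with he | ho
        · exfalso; obtain ⟨m, hm⟩ := he; exact hx ⟨m, by simp; omega⟩
        · obtain ⟨m, hm⟩ := ho; exact ⟨m + 1, by omega⟩
      have hb : (bernoulli (x+2) : ℝ) = 0 := by
        have h1 : bernoulli (x + 2) = (-1) ^ (x + 2) * bernoulli' (x + 2) := rfl
        rw [h1, bernoulli'_eq_zero_of_odd hodd (by omega)]
        simp
      rw [hgdef]; simp [hb]
    exact (Function.Injective.hasSum_iff hinj hvan).mpr hshift
  have hfinal := heven.div_const z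
  convert hfinal using 1
  · rfl
  · funext n
    rw [hgdef]
    simp only [hwdef]
    have h1 : 2 * (n + 1) - 1 = 2 * n + 1 := by omega
    have h2 : 2 * n + 2 = 2 * (n + 1) := by omega
    rw [h1, h2, mul_pow]
    have hf : ((Nat.factorial (2 * (n+1))) : ℝ) ≠ 0 := by positivity
    field_simp
    ring
  · -- sum identity
    rw [Real.cosh_eq, Real.sinh_eq]
    have hez : Real.exp z ≠ 0 := (Real.exp_pos z).ne'
    have hsz : Real.exp z - Real.exp (-z) ≠ 0 := by
      intro h
      apply Real.sinh_ne_zero.mpr hz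
      rw [Real.sinh_eq, h]; norm_num
    have hew : Real.exp w = Real.exp z * Real.exp z := by
      rw [hwdef, two_mul, Real.exp_add]
    rw [Real.exp_neg] at hsz ⊢
    rw [hew] at hexpne ⊢
    field_simp
    rw [hwdef]
    have he2 : -1 + Real.exp z ^ 2 ≠ 0 := by rw [sq]; intro h; apply hexpne; linarith
    have hX := inv_mul_cancel₀ he2
    linear_combination z * hX
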